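/- arXiv:2303.07867 — 2 statements merged into one kernel-verified Lean document; each statement's English description precedes it below -/
import Mathlib

section
/- Let q > 1 and p_0,…,p_{q−1} > 0 with ∑ p_j = 1, and take n_k = k for all k (so β̈_{i_k} uses β when k even, and β_{q−1−i_k} when k odd, similarly p̈). Then the function h : [−q/(q+1), 1/(q+1)] → ℝ given by h(x) = β̈_{i_1} + ∑_{k=2}^∞ (β̈_{i_k} ∏_{r=1}^{k−1} p̈_{i_r}) is well-defined (independent of the choice of representation at nega-q-rational points) and strictly increasing. -/
/-- The nega-`q`-ary value of a digit sequence `i : ℕ → ℕ`,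
where `i k` is the digit at (1-based) position `k+1`. -/
noncomputable def negaVal (q : ℕ) (i : ℕ → ℕ) : ℝ :=
  ∑' k : ℕ, (i k : ℝ) / (-(q : ℝ)) ^ (k + 1)

/-- `β_i = p_0 + … + p_{i-1}` (so `β_0 = 0`). -/
noncomputable def beta (p : ℕ → ℝ) (i : ℕ) : ℝ := ∑ j ∈ Finset.range i, p j

/-- Parity-modified `β̈`. -/
noncomputable def ddBeta (q : ℕ) (p : ℕ → ℝ) (i pos : ℕ) : ℝ :=
  if Even pos then beta p i else beta p (q - 1 - i)

/-- Parity-modified `p̈`. -/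
noncomputable def ddP (q : ℕ) (p : ℕ → ℝ) (i pos : ℕ) : ℝ :=
  if Even pos then p i else p (q - 1 - i)

/-- The Salem series for the identity enumeration `n_k = k`:
`β̈_{i_1} + ∑_{k≥2} β̈_{i_k} ∏_{r<k} p̈_{i_r}` (digit `i k` is at position `k+1`). -/
noncomputable def salemId (q : ℕ) (p : ℕ → ℝ) (i : ℕ → ℕ) : ℝ :=
  ∑' k : ℕ, ddBeta q p (i k) (k + 1) * ∏ r ∈ Finset.range k, ddP q p (i r) (r + 1)

/-! ### Auxiliary machinery -/

noncomputable def stdV (q : ℕ) (a : ℕ → ℕ) : ℝ := ∑' k : ℕ, (a k : ℝ) / (q : ℝ) ^ (k + 1)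

noncomputable def Pr (p : ℕ → ℝ) (a : ℕ → ℕ) (k : ℕ) : ℝ := ∏ r ∈ Finset.range k, p (a r)

noncomputable def stdS (p : ℕ → ℝ) (a : ℕ → ℕ) : ℝ := ∑' k : ℕ, beta p (a k) * Pr p a k

def flipSeq (q : ℕ) (i : ℕ → ℕ) : ℕ → ℕ := fun k => if Even k then q - 1 - i k else i k

section Aux

variable {q : ℕ} {p : ℕ → ℝ}

lemma beta_le_beta (hp : ∀ j < q, 0 < p j) {i j : ℕ} (hij : i ≤ j) (hj : j ≤ q) :
    beta p i ≤ beta p j := by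
  apply Finset.sum_le_sum_of_subset_of_nonneg (Finset.range_subset_range.2 hij)
  intro m hm _
  exact (hp m (lt_of_lt_of_le (Finset.mem_range.1 hm) hj)).le

lemma beta_succ (i : ℕ) : beta p (i + 1) = beta p i + p i := Finset.sum_range_succ _ _

lemma beta_zero : beta p 0 = 0 := by simp [beta]

lemma beta_nonneg (hp : ∀ j < q, 0 < p j) {i : ℕ} (hi : i ≤ q) : 0 ≤ beta p i := by
  have := beta_le_beta hp (Nat.zero_le i) hi
  simpa [beta_zero] using this

lemma beta_lt_beta (hp : ∀ j < q, 0 < p j) {i j : ℕ} (hij : i < j) (hj : j ≤ q) :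
    beta p i < beta p j :=
  calc beta p i < beta p (i + 1) := by
        rw [beta_succ]; linarith [hp i (lt_of_lt_of_le hij hj)]
    _ ≤ beta p j := beta_le_beta hp hij hj

lemma geom_term_eq (c : ℝ) (q : ℕ) (k : ℕ) :
    c / (q : ℝ) ^ (k + 1) = (c / q) * (1 / q) ^ k := by
  rw [div_pow, one_pow, div_mul_div_comm, mul_one, ← pow_succ']

lemma summable_geom_aux (hq : 1 < q) (c : ℝ) :
    Summable (fun k : ℕ => c / (q : ℝ) ^ (k + 1)) := by
  have hq1 : (1 : ℝ) < q := by exact_mod_cast hq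
  rw [funext fun k => geom_term_eq c q k]
  exact (summable_geometric_of_lt_one (by positivity)
    (by rw [div_lt_one (by linarith)]; linarith)).mul_left _

lemma tsum_geom_aux (hq : 1 < q) :
    ∑' k : ℕ, ((q : ℝ) - 1) / (q : ℝ) ^ (k + 1) = 1 := by
  have hq1 : (1 : ℝ) < q := by exact_mod_cast hq
  rw [tsum_congr (fun k => geom_term_eq ((q : ℝ) - 1) q k), tsum_mul_left,
    tsum_geometric_of_lt_one (by positivity) (by rw [div_lt_one (by linarith)]; linarith)]
  have h1 : (1 : ℝ) - 1 / q = ((q : ℝ) - 1) / q := by field_simp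
  rw [h1]
  exact mul_inv_cancel₀ (ne_of_gt (div_pos (by linarith) (by linarith)))

lemma summable_stdV (hq : 1 < q) (a : ℕ → ℕ) (ha : ∀ k, a k < q) :
    Summable (fun k : ℕ => (a k : ℝ) / (q : ℝ) ^ (k + 1)) := by
  have hq1 : (1 : ℝ) < q := by exact_mod_cast hq
  have hg : Summable (fun k : ℕ => ((q : ℝ) - 1) / (q : ℝ) ^ (k + 1)) :=
    summable_geom_aux hq _
  refine Summable.of_nonneg_of_le (fun k => by positivity) (fun k => ?_) hg
  have hcast : (a k : ℝ) ≤ (q : ℝ) - 1 := by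
    have h1 : ((a k : ℕ) : ℝ) + 1 ≤ (q : ℝ) := by exact_mod_cast Nat.succ_le_of_lt (ha k)
    linarith
  exact div_le_div_of_nonneg_right hcast (by positivity) |>.trans_eq rfl

lemma stdV_nonneg (a : ℕ → ℕ) : 0 ≤ stdV q a :=
  tsum_nonneg fun k => by positivity

lemma stdV_le_one (hq : 1 < q) (a : ℕ → ℕ) (ha : ∀ k, a k < q) : stdV q a ≤ 1 := by
  have hq1 : (1 : ℝ) < q := by exact_mod_cast hq
  rw [← tsum_geom_aux hq]
  apply Summable.tsum_le_tsum _ (summable_stdV hq a ha) (summable_geom_aux hq _)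
  intro k
  have h1 : ((a k : ℕ) : ℝ) + 1 ≤ (q : ℝ) := by exact_mod_cast Nat.succ_le_of_lt (ha k)
  exact div_le_div_of_nonneg_right (by linarith) (by positivity)

lemma stdV_eq_one (hq : 1 < q) (a : ℕ → ℕ) (ha : ∀ k, a k = q - 1) : stdV q a = 1 := by
  rw [← tsum_geom_aux hq]
  apply tsum_congr
  intro k
  rw [ha k]
  congr 1
  rw [Nat.cast_sub (by omega)]
  simp

lemma stdV_lt_one (hq : 1 < q) (a : ℕ → ℕ) (ha : ∀ k, a k < q) (m : ℕ) (hm : a m ≠ q - 1) :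
    stdV q a < 1 := by
  have hq1 : (1 : ℝ) < q := by exact_mod_cast hq
  rw [← tsum_geom_aux hq]
  apply Summable.tsum_lt_tsum (i := m) _ _ (summable_stdV hq a ha) (summable_geom_aux hq _)
  · intro k
    have h1 : ((a k : ℕ) : ℝ) + 1 ≤ (q : ℝ) := by exact_mod_cast Nat.succ_le_of_lt (ha k)
    exact div_le_div_of_nonneg_right (by linarith) (by positivity)
  · have h2 : a m + 1 < q := by have := ha m; omega
    have h3 : ((a m : ℕ) : ℝ) + 1 < (q : ℝ) := by exact_mod_cast h2
    exact div_lt_div_of_pos_right (by linarith) (by positivity)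

lemma stdV_pos (hq : 1 < q) (a : ℕ → ℕ) (ha : ∀ k, a k < q) (m : ℕ) (hm : a m ≠ 0) :
    0 < stdV q a := by
  have hq0 : (0 : ℝ) < q := by positivity
  have hterm : 0 < (a m : ℝ) / (q : ℝ) ^ (m + 1) := by
    have : 0 < (a m : ℝ) := by exact_mod_cast Nat.pos_of_ne_zero hm
    positivity
  exact lt_of_lt_of_le hterm (Summable.le_tsum (summable_stdV hq a ha) m fun j _ => by positivity)

lemma stdV_eq_zero (a : ℕ → ℕ) (ha : ∀ k, a k = 0) : stdV q a = 0 := by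
  have h : ∀ k : ℕ, (a k : ℝ) / (q : ℝ) ^ (k + 1) = 0 := fun k => by rw [ha k]; simp
  rw [stdV, tsum_congr h, tsum_zero]

lemma stdV_split (hq : 1 < q) (a : ℕ → ℕ) (ha : ∀ k, a k < q) (n : ℕ) :
    stdV q a = (∑ k ∈ Finset.range n, (a k : ℝ) / (q : ℝ) ^ (k + 1))
      + (1 / q) ^ n * stdV q (fun m => a (n + m)) := by
  have hq0 : (0 : ℝ) < q := by exact_mod_cast Nat.lt_of_lt_of_le Nat.zero_lt_one hq.le
  rw [stdV, ← Summable.sum_add_tsum_nat_add n (summable_stdV hq a ha)]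
  congr 1
  rw [stdV, ← tsum_mul_left]
  apply tsum_congr
  intro i
  rw [Nat.add_comm i n, one_div, inv_pow, show n + i + 1 = n + (i + 1) by omega, pow_add]
  field_simp

lemma Pr_succ (a : ℕ → ℕ) (k : ℕ) : Pr p a (k + 1) = Pr p a k * p (a k) :=
  Finset.prod_range_succ _ _

lemma Pr_pos (hp : ∀ j < q, 0 < p j) (a : ℕ → ℕ) (ha : ∀ k, a k < q) (k : ℕ) :
    0 < Pr p a k :=
  Finset.prod_pos fun r _ => hp (a r) (ha r)

lemma Qle (hp : ∀ j < q, 0 < p j) (hps : ∑ j ∈ Finset.range q, p j = 1)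
    (a : ℕ → ℕ) (ha : ∀ k, a k < q) :
    ∀ n, ∑ k ∈ Finset.range n, beta p (a k) * Pr p a k ≤ 1 - Pr p a n := by
  intro n
  induction n with
  | zero => simp [Pr]
  | succ n ih =>
    rw [Finset.sum_range_succ, Pr_succ]
    have h1 : beta p (a n) ≤ 1 - p (a n) := by
      have h2 : beta p (a n + 1) ≤ beta p q := beta_le_beta hp (ha n) le_rfl
      rw [beta_succ] at h2
      have h3 : beta p q = 1 := hps
      linarith
    have hP := Pr_pos hp a ha n
    nlinarith [mul_le_mul_of_nonneg_right h1 hP.le]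

lemma summable_stdS (hp : ∀ j < q, 0 < p j) (hps : ∑ j ∈ Finset.range q, p j = 1)
    (a : ℕ → ℕ) (ha : ∀ k, a k < q) :
    Summable (fun k => beta p (a k) * Pr p a k) := by
  apply summable_of_sum_range_le
    (fun k => mul_nonneg (beta_nonneg hp (ha k).le) (Pr_pos hp a ha k).le)
  intro n
  have := Qle hp hps a ha n
  have := Pr_pos hp a ha n
  linarith

lemma stdS_nonneg (hp : ∀ j < q, 0 < p j) (a : ℕ → ℕ) (ha : ∀ k, a k < q) :
    0 ≤ stdS p a :=
  tsum_nonneg fun k => mul_nonneg (beta_nonneg hp (ha k).le) (Pr_pos hp a ha k).le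

lemma stdS_le_one (hp : ∀ j < q, 0 < p j) (hps : ∑ j ∈ Finset.range q, p j = 1)
    (a : ℕ → ℕ) (ha : ∀ k, a k < q) : stdS p a ≤ 1 := by
  apply Summable.tsum_le_of_sum_range_le (summable_stdS hp hps a ha)
  intro n
  have := Qle hp hps a ha n
  have := Pr_pos hp a ha n
  linarith

lemma stdS_split (hp : ∀ j < q, 0 < p j) (hps : ∑ j ∈ Finset.range q, p j = 1)
    (a : ℕ → ℕ) (ha : ∀ k, a k < q) (n : ℕ) :
    stdS p a = (∑ k ∈ Finset.range n, beta p (a k) * Pr p a k)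
      + Pr p a n * stdS p (fun m => a (n + m)) := by
  rw [stdS, ← Summable.sum_add_tsum_nat_add n (summable_stdS hp hps a ha)]
  congr 1
  rw [stdS, ← tsum_mul_left]
  apply tsum_congr
  intro i
  rw [Nat.add_comm i n]
  have hPr : Pr p a (n + i) = Pr p a n * Pr p (fun m => a (n + m)) i := by
    unfold Pr
    rw [Finset.prod_range_add]
  rw [hPr]
  ring

lemma stdS_eq_zero (a : ℕ → ℕ) (ha : ∀ k, a k = 0) : stdS p a = 0 := by
  have h : ∀ k : ℕ, beta p (a k) * Pr p a k = 0 := fun k => by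
    rw [ha k, beta_zero, zero_mul]
  rw [stdS, tsum_congr h, tsum_zero]

lemma stdS_pos (hp : ∀ j < q, 0 < p j) (hps : ∑ j ∈ Finset.range q, p j = 1)
    (a : ℕ → ℕ) (ha : ∀ k, a k < q) (m : ℕ) (hm : a m ≠ 0) : 0 < stdS p a := by
  have hterm : 0 < beta p (a m) * Pr p a m := by
    have h1 : beta p 0 < beta p (a m) := beta_lt_beta hp (Nat.pos_of_ne_zero hm) (ha m).le
    rw [beta_zero] at h1
    exact mul_pos h1 (Pr_pos hp a ha m)
  exact lt_of_lt_of_le hterm (Summable.le_tsum (summable_stdS hp hps a ha) m fun j _ =>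
    mul_nonneg (beta_nonneg hp (ha j).le) (Pr_pos hp a ha j).le)

lemma stdS_eq_one (hq : 1 < q) (hp : ∀ j < q, 0 < p j)
    (hps : ∑ j ∈ Finset.range q, p j = 1)
    (a : ℕ → ℕ) (ha : ∀ k, a k = q - 1) : stdS p a = 1 := by
  have hq1 : q - 1 < q := by omega
  have hbq : beta p q = 1 := hps
  have hb : beta p (q - 1) = 1 - p (q - 1) := by
    have h1 := beta_succ (p := p) (q - 1)
    rw [Nat.sub_add_cancel (by omega)] at h1
    linarith
  have hr0 : (0 : ℝ) ≤ p (q - 1) := (hp _ hq1).le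
  have hr1 : p (q - 1) < 1 := by
    have h0 : beta p 0 < beta p (q - 1) := beta_lt_beta hp (by omega) hq1.le
    rw [beta_zero] at h0
    linarith
  have hPr : ∀ k, Pr p a k = (p (q - 1)) ^ k := by
    intro k
    unfold Pr
    rw [Finset.prod_congr rfl (fun r _ => by rw [ha r]), Finset.prod_const, Finset.card_range]
  have h : ∀ k : ℕ, beta p (a k) * Pr p a k = beta p (q - 1) * (p (q - 1)) ^ k := fun k => by
    rw [ha k, hPr k]
  rw [stdS, tsum_congr h, tsum_mul_left,
    tsum_geometric_of_lt_one hr0 hr1, hb, mul_inv_cancel₀ (by linarith)]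

lemma stdS_lt_one (hq : 1 < q) (hp : ∀ j < q, 0 < p j)
    (hps : ∑ j ∈ Finset.range q, p j = 1)
    (a : ℕ → ℕ) (ha : ∀ k, a k < q) (m : ℕ) (hm : a m ≠ q - 1) : stdS p a < 1 := by
  have ham : a m + 1 ≤ q - 1 := by have := ha m; omega
  have hbq : beta p q = 1 := hps
  have hb : beta p (q - 1) = 1 - p (q - 1) := by
    have h1 := beta_succ (p := p) (q - 1)
    rw [Nat.sub_add_cancel (by omega)] at h1
    linarith
  have h3 : beta p (a m) ≤ 1 - p (a m) - p (q - 1) := by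
    have h4 : beta p (a m + 1) ≤ beta p (q - 1) := beta_le_beta hp ham (by omega)
    rw [beta_succ] at h4
    linarith
  have hQ := Qle hp hps a ha m
  have hS1 : stdS p (fun i => a (m + 1 + i)) ≤ 1 := stdS_le_one hp hps _ (fun k => ha _)
  have hS0 : 0 ≤ stdS p (fun i => a (m + 1 + i)) := stdS_nonneg hp _ (fun k => ha _)
  have hPm := Pr_pos hp a ha m
  have hpq1 := hp (q - 1) (by omega)
  have hpam := hp (a m) (ha m)
  rw [stdS_split hp hps a ha (m + 1), Finset.sum_range_succ, Pr_succ]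
  nlinarith [mul_le_mul_of_nonneg_right h3 hPm.le,
    mul_le_of_le_one_right (mul_nonneg hPm.le hpam.le) hS1]

end Aux

section Key

variable {q : ℕ} {p : ℕ → ℝ}

lemma key (hq : 1 < q) (hp : ∀ j < q, 0 < p j) (hps : ∑ j ∈ Finset.range q, p j = 1)
    (a b : ℕ → ℕ) (ha : ∀ k, a k < q) (hb : ∀ k, b k < q) (k : ℕ)
    (hpre : ∀ r, r < k → a r = b r) (hk : a k < b k) :
    stdV q a ≤ stdV q b ∧ (stdV q a = stdV q b → stdS p a = stdS p b) ∧
      (stdV q a < stdV q b → stdS p a < stdS p b) := by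
  have hq1 : (1 : ℝ) < q := by exact_mod_cast hq
  have hAq : ∀ m, (fun m => a (k + 1 + m)) m < q := fun m => ha _
  have hBq : ∀ m, (fun m => b (k + 1 + m)) m < q := fun m => hb _
  -- V decomposition
  have hsum_pre_V : ∑ r ∈ Finset.range k, (a r : ℝ) / (q : ℝ) ^ (r + 1)
      = ∑ r ∈ Finset.range k, (b r : ℝ) / (q : ℝ) ^ (r + 1) :=
    Finset.sum_congr rfl fun r hr => by rw [hpre r (Finset.mem_range.1 hr)]
  have hVa := stdV_split hq a ha (k + 1)
  have hVb := stdV_split hq b hb (k + 1)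
  rw [Finset.sum_range_succ] at hVa hVb
  have ht0 : (0 : ℝ) < (1 / (q : ℝ)) ^ (k + 1) := by positivity
  have hterm : ∀ c : ℕ, (c : ℝ) / (q : ℝ) ^ (k + 1) = (1 / (q : ℝ)) ^ (k + 1) * c := by
    intro c
    rw [one_div, inv_pow, inv_mul_eq_div]
  have hVdiff : stdV q b - stdV q a
      = (1 / (q : ℝ)) ^ (k + 1) * (((b k : ℝ) - (a k : ℝ))
        + (stdV q (fun m => b (k + 1 + m)) - stdV q (fun m => a (k + 1 + m)))) := by
    rw [hVa, hVb, ← hsum_pre_V, hterm (a k), hterm (b k)]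
    ring
  have hd1 : (1 : ℝ) ≤ (b k : ℝ) - (a k : ℝ) := by
    have h' : (a k : ℝ) + 1 ≤ (b k : ℝ) := by exact_mod_cast Nat.succ_le_of_lt hk
    linarith
  have hVB0 : 0 ≤ stdV q (fun m => b (k + 1 + m)) := stdV_nonneg _
  have hVA1 : stdV q (fun m => a (k + 1 + m)) ≤ 1 := stdV_le_one hq _ hAq
  -- S decomposition
  have hSa := stdS_split hp hps a ha (k + 1)
  have hSb := stdS_split hp hps b hb (k + 1)
  rw [Finset.sum_range_succ, Pr_succ] at hSa hSb
  have hPr_pre : Pr p a k = Pr p b k :=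
    Finset.prod_congr rfl fun r hr => by rw [hpre r (Finset.mem_range.1 hr)]
  have hsum_pre_S : ∑ r ∈ Finset.range k, beta p (a r) * Pr p a r
      = ∑ r ∈ Finset.range k, beta p (b r) * Pr p b r := by
    apply Finset.sum_congr rfl
    intro r hr
    have hr' := Finset.mem_range.1 hr
    have h1 : a r = b r := hpre r hr'
    have h2 : Pr p a r = Pr p b r :=
      Finset.prod_congr rfl fun s hs => by rw [hpre s (lt_trans (Finset.mem_range.1 hs) hr')]
    rw [h1, h2]
  have hw := Pr_pos hp a ha k
  have hSdiff : stdS p b - stdS p a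
      = Pr p a k * ((beta p (b k) - beta p (a k))
        + (p (b k) * stdS p (fun m => b (k + 1 + m))
          - p (a k) * stdS p (fun m => a (k + 1 + m)))) := by
    rw [hSa, hSb, ← hsum_pre_S, ← hPr_pre]
    ring
  have hbsucc : beta p (a k) + p (a k) = beta p (a k + 1) := (beta_succ _).symm
  have he1 : beta p (a k + 1) ≤ beta p (b k) := beta_le_beta hp hk (hb k).le
  have hSB0 : 0 ≤ stdS p (fun m => b (k + 1 + m)) := stdS_nonneg hp _ hBq
  have hSA1 : stdS p (fun m => a (k + 1 + m)) ≤ 1 := stdS_le_one hp hps _ hAq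
  have hpak := hp (a k) (ha k)
  have hpbk := hp (b k) (hb k)
  refine ⟨?_, ?_, ?_⟩
  · -- V monotone
    have hD : 0 ≤ ((b k : ℝ) - (a k : ℝ))
        + (stdV q (fun m => b (k + 1 + m)) - stdV q (fun m => a (k + 1 + m))) := by
      linarith
    linarith [hVdiff, mul_nonneg ht0.le hD]
  · -- equality case
    intro hVeq
    have hD0 : ((b k : ℝ) - (a k : ℝ))
        + (stdV q (fun m => b (k + 1 + m)) - stdV q (fun m => a (k + 1 + m))) = 0 := by
      have h' : (1 / (q : ℝ)) ^ (k + 1) * (((b k : ℝ) - (a k : ℝ))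
          + (stdV q (fun m => b (k + 1 + m)) - stdV q (fun m => a (k + 1 + m)))) = 0 := by
        rw [← hVdiff, hVeq]; ring
      rcases mul_eq_zero.1 h' with h'' | h''
      · exact absurd h'' ht0.ne'
      · exact h''
    have hVB : stdV q (fun m => b (k + 1 + m)) = 0 := by linarith
    have hVA : stdV q (fun m => a (k + 1 + m)) = 1 := by linarith
    have hc1 : (b k : ℝ) = (a k : ℝ) + 1 := by linarith
    have hbk : b k = a k + 1 := by exact_mod_cast hc1
    have hBz : ∀ m, (fun m => b (k + 1 + m)) m = 0 := by
      intro m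
      by_contra hmm
      exact absurd hVB (ne_of_gt (stdV_pos hq _ hBq m hmm))
    have hAz : ∀ m, (fun m => a (k + 1 + m)) m = q - 1 := by
      intro m
      by_contra hmm
      have := stdV_lt_one hq _ hAq m hmm
      linarith
    have hSBeq : stdS p (fun m => b (k + 1 + m)) = 0 := stdS_eq_zero _ hBz
    have hSAeq : stdS p (fun m => a (k + 1 + m)) = 1 := stdS_eq_one hq hp hps _ hAz
    have hE : (beta p (b k) - beta p (a k))
        + (p (b k) * stdS p (fun m => b (k + 1 + m))
          - p (a k) * stdS p (fun m => a (k + 1 + m))) = 0 := by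
      rw [hSBeq, hSAeq, hbk, beta_succ]
      ring
    rw [hE, mul_zero] at hSdiff
    linarith
  · -- strict case
    intro hVlt
    have hSAub : p (a k) * stdS p (fun m => a (k + 1 + m)) ≤ p (a k) :=
      mul_le_of_le_one_right hpak.le hSA1
    have hSBlb : 0 ≤ p (b k) * stdS p (fun m => b (k + 1 + m)) :=
      mul_nonneg hpbk.le hSB0
    have hE_ge : 0 ≤ (beta p (b k) - beta p (a k))
        + (p (b k) * stdS p (fun m => b (k + 1 + m))
          - p (a k) * stdS p (fun m => a (k + 1 + m))) := by
      linarith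
    rcases hE_ge.lt_or_eq with hE | hE
    · linarith [hSdiff, mul_pos hw hE]
    · exfalso
      have hc2 : p (b k) * stdS p (fun m => b (k + 1 + m)) = 0 := by linarith
      have hc3 : p (a k) * stdS p (fun m => a (k + 1 + m)) = p (a k) := by linarith
      have hc1 : beta p (b k) = beta p (a k + 1) := by linarith
      have hSB : stdS p (fun m => b (k + 1 + m)) = 0 :=
        (mul_eq_zero.1 hc2).resolve_left hpbk.ne'
      have hSA : stdS p (fun m => a (k + 1 + m)) = 1 := by
        have h' : p (a k) * (1 - stdS p (fun m => a (k + 1 + m))) = 0 := by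
          rw [mul_sub, mul_one, hc3]; ring
        have := (mul_eq_zero.1 h').resolve_left hpak.ne'
        linarith
      have hbk : b k = a k + 1 := by
        by_contra hne
        have h' : a k + 1 < b k := lt_of_le_of_ne (Nat.succ_le_of_lt hk) (Ne.symm hne)
        exact absurd hc1.symm (ne_of_lt (beta_lt_beta hp h' (hb k).le))
      have hBz : ∀ m, (fun m => b (k + 1 + m)) m = 0 := by
        intro m
        by_contra hmm
        exact absurd hSB (ne_of_gt (stdS_pos hp hps _ hBq m hmm))
      have hAz : ∀ m, (fun m => a (k + 1 + m)) m = q - 1 := by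
        intro m
        by_contra hmm
        have := stdS_lt_one hq hp hps _ hAq m hmm
        linarith
      have hVB : stdV q (fun m => b (k + 1 + m)) = 0 := stdV_eq_zero _ hBz
      have hVA : stdV q (fun m => a (k + 1 + m)) = 1 := stdV_eq_one hq _ hAz
      have hc : (b k : ℝ) = (a k : ℝ) + 1 := by exact_mod_cast hbk
      have : stdV q b - stdV q a = 0 := by
        rw [hVdiff, hVB, hVA, hc]; ring
      linarith

lemma flip_lt (hq : 1 < q) (i : ℕ → ℕ) (hi : ∀ k, i k < q) : ∀ k, flipSeq q i k < q := by
  intro k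
  unfold flipSeq
  split
  · omega
  · exact hi k

lemma salemId_eq_stdS (i : ℕ → ℕ) : salemId q p i = stdS p (flipSeq q i) := by
  unfold salemId stdS
  apply tsum_congr
  intro k
  congr 1
  · by_cases hk : Even k
    · simp [ddBeta, flipSeq, beta, hk, Nat.even_add_one]
    · simp [ddBeta, flipSeq, beta, hk, Nat.even_add_one]
  · unfold Pr
    apply Finset.prod_congr rfl
    intro r _
    by_cases hr : Even r
    · simp [ddP, flipSeq, hr, Nat.even_add_one]
    · simp [ddP, flipSeq, hr, Nat.even_add_one]

lemma negaVal_eq_stdV (hq : 1 < q) (i : ℕ → ℕ) (hi : ∀ k, i k < q) :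
    negaVal q i = stdV q (flipSeq q i) - stdV q (flipSeq q (fun _ => 0)) := by
  have hq1 : (1 : ℝ) < q := by exact_mod_cast hq
  have hsf : Summable (fun k : ℕ => (flipSeq q i k : ℝ) / (q : ℝ) ^ (k + 1)) :=
    summable_stdV hq _ (flip_lt hq i hi)
  have hse : Summable (fun k : ℕ => (flipSeq q (fun _ => 0) k : ℝ) / (q : ℝ) ^ (k + 1)) :=
    summable_stdV hq _ (flip_lt hq _ (fun _ => by omega))
  have hterm : ∀ k : ℕ, (i k : ℝ) / (-(q : ℝ)) ^ (k + 1)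
      = (flipSeq q i k : ℝ) / (q : ℝ) ^ (k + 1)
        - (flipSeq q (fun _ => 0) k : ℝ) / (q : ℝ) ^ (k + 1) := by
    intro k
    by_cases hk : Even k
    · simp only [flipSeq, if_pos hk]
      rw [(hk.add_one).neg_pow,
        Nat.cast_sub (show i k ≤ q - 1 by have := hi k; omega),
        Nat.cast_sub (show (0:ℕ) ≤ q - 1 by omega),
        Nat.cast_sub (show 1 ≤ q by omega), div_neg]
      push_cast
      ring
    · simp only [flipSeq, if_neg hk]
      rw [(Nat.even_add_one.2 hk).neg_pow]
      push_cast
      ring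
  rw [negaVal, tsum_congr hterm, Summable.tsum_sub hsf hse, stdV, stdV]

end Key

/-- For `n_k = k`, the Salem function is well defined on
`[−q/(q+1), 1/(q+1)]` (independent of the representation) and strictly increasing. -/
theorem salemId_well_defined_and_strict_mono
    (q : ℕ) (hq : 1 < q) (p : ℕ → ℝ)
    (hp : ∀ j < q, 0 < p j)
    (hps : ∑ j ∈ Finset.range q, p j = 1) :
    (∀ i j : ℕ → ℕ, (∀ k, i k < q) → (∀ k, j k < q) →
      negaVal q i = negaVal q j → salemId q p i = salemId q p j) ∧
    (∀ i j : ℕ → ℕ, (∀ k, i k < q) → (∀ k, j k < q) →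
      negaVal q i < negaVal q j → salemId q p i < salemId q p j) := by
  constructor
  · intro i j hi hj hval
    rw [salemId_eq_stdS, salemId_eq_stdS]
    have ha := flip_lt hq i hi
    have hb := flip_lt hq j hj
    have hV : stdV q (flipSeq q i) = stdV q (flipSeq q j) := by
      rw [negaVal_eq_stdV hq i hi, negaVal_eq_stdV hq j hj] at hval
      linarith
    by_cases hab : flipSeq q i = flipSeq q j
    · rw [hab]
    · have hex : ∃ k, flipSeq q i k ≠ flipSeq q j k := Function.ne_iff.1 hab
      have hkne : flipSeq q i (Nat.find hex) ≠ flipSeq q j (Nat.find hex) := Nat.find_spec hex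
      have hpre : ∀ r, r < Nat.find hex → flipSeq q i r = flipSeq q j r := fun r hr =>
        not_not.1 (Nat.find_min hex hr)
      rcases lt_or_gt_of_ne hkne with h | h
      · exact (key hq hp hps _ _ ha hb (Nat.find hex) hpre h).2.1 hV
      · exact ((key hq hp hps _ _ hb ha (Nat.find hex)
          (fun r hr => (hpre r hr).symm) h).2.1 hV.symm).symm
  · intro i j hi hj hval
    rw [salemId_eq_stdS, salemId_eq_stdS]
    have ha := flip_lt hq i hi
    have hb := flip_lt hq j hj
    have hV : stdV q (flipSeq q i) < stdV q (flipSeq q j) := by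
      rw [negaVal_eq_stdV hq i hi, negaVal_eq_stdV hq j hj] at hval
      linarith
    have hab : flipSeq q i ≠ flipSeq q j := by
      intro h
      rw [h] at hV
      exact lt_irrefl _ hV
    have hex : ∃ k, flipSeq q i k ≠ flipSeq q j k := Function.ne_iff.1 hab
    have hkne : flipSeq q i (Nat.find hex) ≠ flipSeq q j (Nat.find hex) := Nat.find_spec hex
    have hpre : ∀ r, r < Nat.find hex → flipSeq q i r = flipSeq q j r := fun r hr =>
      not_not.1 (Nat.find_min hex hr)
    rcases lt_or_gt_of_ne hkne with h | h
    · exact (key hq hp hps _ _ ha hb (Nat.find hex) hpre h).2.2 hV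
    · exfalso
      have := (key (p := p) hq hp hps _ _ hb ha (Nat.find hex)
        (fun r hr => (hpre r hr).symm) h).1
      linarith
end

section
/- Let q > 1, p_j > 0 with ∑ p_j = 1, and n_k = k. For the function h as above and any cylinder Λ^{−q}_{c_1…c_r} of rank r, the increment of h over the cylinder equals ∏_{j=1}^{r} p̈_{c_j}, i.e., sup_{x ∈ Λ} h(x) − inf_{x ∈ Λ} h(x) = ∏_{j=1}^{r} p̈_{c_j}. -/
/-- Salem-type tail series starting at position offset `s`. -/
noncomputable def salemFrom (q : ℕ) (p : ℕ → ℝ) (s : ℕ) (i : ℕ → ℕ) : ℝ :=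
  ∑' k : ℕ, ddBeta q p (i k) (s + k + 1) * ∏ j ∈ Finset.range k, ddP q p (i j) (s + j + 1)

lemma ddBeta_nonneg' {q : ℕ} {p : ℕ → ℝ} (hp : ∀ j < q, 0 < p j) {i pos : ℕ} (hi : i < q) :
    0 ≤ ddBeta q p i pos := by
  unfold ddBeta beta
  split <;> exact Finset.sum_nonneg fun j hj => (hp j (by have := Finset.mem_range.mp hj; omega)).le

lemma ddP_pos' {q : ℕ} {p : ℕ → ℝ} (hp : ∀ j < q, 0 < p j) {i pos : ℕ} (hi : i < q) :
    0 < ddP q p i pos := by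
  unfold ddP
  split
  · exact hp i hi
  · exact hp _ (by omega)

lemma ddBeta_add_ddP_le_one {q : ℕ} {p : ℕ → ℝ} (hp : ∀ j < q, 0 < p j)
    (hps : ∑ j ∈ Finset.range q, p j = 1) {i pos : ℕ} (hi : i < q) :
    ddBeta q p i pos + ddP q p i pos ≤ 1 := by
  have key : ∀ m, m < q → beta p m + p m ≤ 1 := by
    intro m hm
    have h1 : beta p m + p m = ∑ j ∈ Finset.range (m + 1), p j :=
      (Finset.sum_range_succ p m).symm
    rw [h1, ← hps]
    apply Finset.sum_le_sum_of_subset_of_nonneg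
    · exact Finset.range_subset_range.mpr hm
    · intro j hj _; exact (hp j (Finset.mem_range.mp hj)).le
  unfold ddBeta ddP
  split
  · exact key i hi
  · exact key _ (by omega)

lemma aux_partial (a b : ℕ → ℝ) (ha : ∀ k, 0 ≤ a k) (hb : ∀ k, 0 ≤ b k)
    (hab : ∀ k, a k + b k ≤ 1) (n : ℕ) :
    ∑ k ∈ Finset.range n, a k * ∏ j ∈ Finset.range k, b j
      ≤ 1 - ∏ j ∈ Finset.range n, b j := by
  induction n with
  | zero => simp
  | succ n ih =>
    rw [Finset.sum_range_succ, Finset.prod_range_succ]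
    have hP : 0 ≤ ∏ j ∈ Finset.range n, b j := Finset.prod_nonneg fun j _ => hb j
    have h2 : a n * ∏ j ∈ Finset.range n, b j ≤ (1 - b n) * ∏ j ∈ Finset.range n, b j := by
      apply mul_le_mul_of_nonneg_right _ hP
      linarith [hab n]
    nlinarith

lemma aux_summable (a b : ℕ → ℝ) (ha : ∀ k, 0 ≤ a k) (hb : ∀ k, 0 ≤ b k)
    (hab : ∀ k, a k + b k ≤ 1) :
    Summable (fun k => a k * ∏ j ∈ Finset.range k, b j) ∧
      0 ≤ (∑' k, a k * ∏ j ∈ Finset.range k, b j) ∧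
      (∑' k, a k * ∏ j ∈ Finset.range k, b j) ≤ 1 := by
  have hterm : ∀ k, 0 ≤ a k * ∏ j ∈ Finset.range k, b j :=
    fun k => mul_nonneg (ha k) (Finset.prod_nonneg fun j _ => hb j)
  have hbd : ∀ n, ∑ k ∈ Finset.range n, a k * ∏ j ∈ Finset.range k, b j ≤ 1 := by
    intro n
    have := aux_partial a b ha hb hab n
    have hP : 0 ≤ ∏ j ∈ Finset.range n, b j := Finset.prod_nonneg fun j _ => hb j
    linarith
  exact ⟨summable_of_sum_range_le hterm hbd, tsum_nonneg hterm,
    Real.tsum_le_of_sum_range_le hterm hbd⟩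

lemma salemFrom_bounds {q : ℕ} {p : ℕ → ℝ} (hp : ∀ j < q, 0 < p j)
    (hps : ∑ j ∈ Finset.range q, p j = 1) (s : ℕ) (i : ℕ → ℕ) (hi : ∀ k, i k < q) :
    0 ≤ salemFrom q p s i ∧ salemFrom q p s i ≤ 1 := by
  have := aux_summable (fun k => ddBeta q p (i k) (s + k + 1))
    (fun j => ddP q p (i j) (s + j + 1))
    (fun k => ddBeta_nonneg' hp (hi k)) (fun j => (ddP_pos' hp (hi j)).le)
    (fun k => ddBeta_add_ddP_le_one hp hps (hi k))
  exact ⟨this.2.1, this.2.2⟩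

lemma salemId_summable {q : ℕ} {p : ℕ → ℝ} (hp : ∀ j < q, 0 < p j)
    (hps : ∑ j ∈ Finset.range q, p j = 1) (i : ℕ → ℕ) (hi : ∀ k, i k < q) :
    Summable (fun k => ddBeta q p (i k) (k + 1) * ∏ j ∈ Finset.range k, ddP q p (i j) (j + 1)) :=
  (aux_summable (fun k => ddBeta q p (i k) (k + 1)) (fun j => ddP q p (i j) (j + 1))
    (fun k => ddBeta_nonneg' hp (hi k)) (fun j => (ddP_pos' hp (hi j)).le)
    (fun k => ddBeta_add_ddP_le_one hp hps (hi k))).1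

lemma salem_split {q : ℕ} {p : ℕ → ℝ} (hp : ∀ j < q, 0 < p j)
    (hps : ∑ j ∈ Finset.range q, p j = 1) (i : ℕ → ℕ) (hi : ∀ k, i k < q) (r : ℕ) :
    salemId q p i =
      (∑ k ∈ Finset.range r, ddBeta q p (i k) (k + 1) * ∏ j ∈ Finset.range k, ddP q p (i j) (j + 1))
        + (∏ j ∈ Finset.range r, ddP q p (i j) (j + 1)) *
            salemFrom q p r (fun t => i (r + t)) := by
  have hsum := salemId_summable hp hps i hi
  unfold salemId salemFrom
  rw [← Summable.sum_add_tsum_nat_add r hsum]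
  congr 1
  have h1 : ∀ k : ℕ,
      ddBeta q p (i (k + r)) (k + r + 1) * ∏ j ∈ Finset.range (k + r), ddP q p (i j) (j + 1)
        = (∏ j ∈ Finset.range r, ddP q p (i j) (j + 1)) *
          (ddBeta q p (i (r + k)) (r + k + 1) *
            ∏ j ∈ Finset.range k, ddP q p (i (r + j)) (r + j + 1)) := by
    intro k
    rw [add_comm k r, Finset.prod_range_add]
    ring
  rw [tsum_congr h1, tsum_mul_left]

lemma salemFrom_max {q : ℕ} {p : ℕ → ℝ} (hq : 1 < q) (hp : ∀ j < q, 0 < p j)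
    (hps : ∑ j ∈ Finset.range q, p j = 1) (s : ℕ) (i : ℕ → ℕ)
    (hval : ∀ k, i k = if Even (s + k + 1) then q - 1 else 0) :
    salemFrom q p s i = 1 := by
  have hbeta : ∀ k, ddBeta q p (i k) (s + k + 1) = beta p (q - 1) := by
    intro k
    rw [hval k]
    unfold ddBeta
    by_cases h : Even (s + k + 1) <;> simp [h]
  have hP : ∀ j, ddP q p (i j) (s + j + 1) = p (q - 1) := by
    intro j
    rw [hval j]
    unfold ddP
    by_cases h : Even (s + j + 1) <;> simp [h]
  unfold salemFrom
  have hterm : ∀ k : ℕ, ddBeta q p (i k) (s + k + 1) *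
      ∏ j ∈ Finset.range k, ddP q p (i j) (s + j + 1) = beta p (q - 1) * p (q - 1) ^ k := by
    intro k
    rw [hbeta k]
    congr 1
    rw [Finset.prod_congr rfl fun j _ => hP j, Finset.prod_const, Finset.card_range]
  rw [tsum_congr hterm, tsum_mul_left, tsum_geometric_of_lt_one (hp _ (by omega)).le]
  · have hβπ : beta p (q - 1) + p (q - 1) = 1 := by
      have : beta p (q - 1) + p (q - 1) = ∑ j ∈ Finset.range (q - 1 + 1), p j :=
        (Finset.sum_range_succ p (q - 1)).symm
      rw [this, show q - 1 + 1 = q by omega, hps]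
    have hβpos : 0 < beta p (q - 1) := by
      apply Finset.sum_pos (fun j hj => hp j (by have := Finset.mem_range.mp hj; omega))
      exact ⟨0, Finset.mem_range.mpr (by omega)⟩
    rw [show (1 : ℝ) - p (q - 1) = beta p (q - 1) by linarith]
    field_simp
  · have hβpos : 0 < beta p (q - 1) := by
      apply Finset.sum_pos (fun j hj => hp j (by have := Finset.mem_range.mp hj; omega))
      exact ⟨0, Finset.mem_range.mpr (by omega)⟩
    have hβπ : beta p (q - 1) + p (q - 1) = 1 := by
      have : beta p (q - 1) + p (q - 1) = ∑ j ∈ Finset.range (q - 1 + 1), p j :=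
        (Finset.sum_range_succ p (q - 1)).symm
      rw [this, show q - 1 + 1 = q by omega, hps]
    linarith

lemma salemFrom_min {q : ℕ} {p : ℕ → ℝ} (s : ℕ) (i : ℕ → ℕ)
    (hval : ∀ k, i k = if Even (s + k + 1) then 0 else q - 1) :
    salemFrom q p s i = 0 := by
  unfold salemFrom
  have hterm : ∀ k : ℕ, ddBeta q p (i k) (s + k + 1) *
      ∏ j ∈ Finset.range k, ddP q p (i j) (s + j + 1) = 0 := by
    intro k
    have : ddBeta q p (i k) (s + k + 1) = 0 := by
      rw [hval k]
      unfold ddBeta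
      by_cases h : Even (s + k + 1) <;> simp [h, beta, show q - 1 - (q - 1) = 0 by omega]
    rw [this, zero_mul]
  rw [tsum_congr hterm, tsum_zero]

/-- The increment of the Salem function over the cylinder `Λ^{-q}_{c_1…c_r}`
equals `∏_{j=1}^r p̈_{c_j}`. -/
theorem salem_increment_over_cylinder
    (q : ℕ) (hq : 1 < q) (p : ℕ → ℝ)
    (hp : ∀ j < q, 0 < p j)
    (hps : ∑ j ∈ Finset.range q, p j = 1)
    (r : ℕ) (hr : 1 ≤ r) (c : ℕ → ℕ) (hc : ∀ j < r, c j < q) :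
    sSup {y : ℝ | ∃ i : ℕ → ℕ, (∀ k, i k < q) ∧ (∀ j < r, i j = c j) ∧ salemId q p i = y} -
      sInf {y : ℝ | ∃ i : ℕ → ℕ, (∀ k, i k < q) ∧ (∀ j < r, i j = c j) ∧ salemId q p i = y} =
      ∏ j ∈ Finset.range r, ddP q p (c j) (j + 1) := by
  set A := {y : ℝ | ∃ i : ℕ → ℕ, (∀ k, i k < q) ∧ (∀ j < r, i j = c j) ∧ salemId q p i = y}
    with hA
  set S := ∑ k ∈ Finset.range r, ddBeta q p (c k) (k + 1) *
      ∏ j ∈ Finset.range k, ddP q p (c j) (j + 1) with hS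
  set P := ∏ j ∈ Finset.range r, ddP q p (c j) (j + 1) with hPdef
  have hPpos : 0 < P :=
    Finset.prod_pos fun j hj => ddP_pos' hp (hc j (Finset.mem_range.mp hj))
  -- key value formula
  have hval : ∀ i : ℕ → ℕ, (∀ k, i k < q) → (∀ j < r, i j = c j) →
      salemId q p i = S + P * salemFrom q p r (fun t => i (r + t)) := by
    intro i hi hic
    rw [salem_split hp hps i hi r]
    congr 1
    · rw [hS]
      apply Finset.sum_congr rfl
      intro k hk
      have hk' := Finset.mem_range.mp hk
      rw [hic k hk']
      congr 1
      exact Finset.prod_congr rfl fun j hj => by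
        rw [hic j (lt_trans (Finset.mem_range.mp hj) hk')]
    · congr 1
      exact Finset.prod_congr rfl fun j hj => by rw [hic j (Finset.mem_range.mp hj)]
  -- bounds for members
  have hub : ∀ y ∈ A, y ≤ S + P := by
    rintro y ⟨i, hi, hic, rfl⟩
    rw [hval i hi hic]
    have := (salemFrom_bounds hp hps r (fun t => i (r + t)) (fun k => hi (r + k))).2
    nlinarith
  have hlb : ∀ y ∈ A, S ≤ y := by
    rintro y ⟨i, hi, hic, rfl⟩
    rw [hval i hi hic]
    have := (salemFrom_bounds hp hps r (fun t => i (r + t)) (fun k => hi (r + k))).1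
    nlinarith
  -- max element
  have hmemMax : S + P ∈ A := by
    refine ⟨fun k => if k < r then c k else if Even (k + 1) then q - 1 else 0, ?_, ?_, ?_⟩
    · intro k
      by_cases h : k < r
      · simp [h, hc k h]
      · by_cases h2 : Even (k + 1) <;> simp [h, h2] <;> omega
    · intro j hj; simp [hj]
    · rw [hval _ _ (fun j hj => by simp [hj])]
      · rw [salemFrom_max hq hp hps r _ (fun k => by
          simp only [show ¬ (r + k < r) by omega, if_false])]
        ring
      · intro k
        by_cases h : k < r
        · simp [h, hc k h]
        · by_cases h2 : Even (k + 1) <;> simp [h, h2] <;> omega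
  -- min element
  have hmemMin : S ∈ A := by
    refine ⟨fun k => if k < r then c k else if Even (k + 1) then 0 else q - 1, ?_, ?_, ?_⟩
    · intro k
      by_cases h : k < r
      · simp [h, hc k h]
      · by_cases h2 : Even (k + 1) <;> simp [h, h2] <;> omega
    · intro j hj; simp [hj]
    · rw [hval _ _ (fun j hj => by simp [hj])]
      · rw [salemFrom_min r _ (fun k => by
          simp only [show ¬ (r + k < r) by omega, if_false])]
        ring
      · intro k
        by_cases h : k < r
        · simp [h, hc k h]
        · by_cases h2 : Even (k + 1) <;> simp [h, h2] <;> omega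
  have hne : A.Nonempty := ⟨S, hmemMin⟩
  have hSup : sSup A = S + P :=
    le_antisymm (csSup_le hne hub) (le_csSup ⟨S + P, hub⟩ hmemMax)
  have hInf : sInf A = S :=
    le_antisymm (csInf_le ⟨S, hlb⟩ hmemMin) (le_csInf hne hlb)
  rw [hSup, hInf]
  ring
end
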